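/- Let N be a finite set of n units, ℋ a sub-σ-algebra, and let G∘ = (N, E∘) and G = (N, E_G) be directed graphs without self-loops. Suppose Y_{j,0}, Y_{j,1} are {0,1}-valued random variables with the irreversibility property Y_{i,1}·(1−Y_{i,0}) = Y_{i,1} almost surely for all i, and for each ij ∈ E∘ there are {0,1}-valued random variables Y*_{ij}(1), Y*_{ij}(0) satisfying: Y_{i,1}·Y_{j,0} = Y*_{ij}(1)·Y_{j,0} and Y_{i,1}·(1−Y_{j,0}) = Y*_{ij}(0)·(1−Y_{j,0}) almost surely; Y_{i,0} and Y_{j,0} conditionally independent given ℋ; and (Y*_{ij}(1), Y*_{ij}(0)) conditionally independent of Y_{j,0} given the σ-algebra generated by ℋ and Y_{i,0}. Let μ_{j,0} = E[Y_{j,0}|ℋ], v² = (1/n)Σ_{j∈N} μ_{j,0}(1−μ_{j,0}), and assume v² > 0 and 1 − μ_{i,0} > 0 almost surely. Assume further: (a) for every ij ∈ E_G \ E∘, Cov(Y_{i,1}, Y_{j,0} | ℋ) = 0 almost surely; (b) for every j ∈ N, Σ_{i: ij ∈ E∘\E_G} E[(Y*_{ij}(1) − Y*_{ij}(0))·1{Y_{i,0}=0}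 | ℋ]/(1 − μ_{i,0}) ≥ 0 almost surely. Then, almost surely, D^I ≥ C_G^I, where D^I = Σ_{j∈N} w_j Σ_{i: ij∈E∘} E[(Y*_{ij}(1) − Y*_{ij}(0))·1{Y_{i,0}=0} | ℋ]/(1−μ_{i,0}) with w_j = μ_{j,0}(1−μ_{j,0})/(n v²), and C_G^I = (1/(n v²)) Σ_{ij∈E_G} Cov(Y_{i,1}/(1−μ_{i,0}), Y_{j,0} | ℋ). -/

import Mathlib

open MeasureTheory ProbabilityTheory

/-- Conditional covariance of two real random variables given a sub-σ-algebra `m`. -/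
noncomputable def condCov {Ω : Type*} {m0 : MeasurableSpace Ω} (μ : Measure Ω)
    (m : MeasurableSpace Ω) (X Y : Ω → ℝ) : Ω → ℝ :=
  fun ω => (μ[fun ω' => X ω' * Y ω' | m]) ω - (μ[X | m]) ω * (μ[Y | m]) ω



lemma myIntegrable_of_bound {Ω : Type*} [mΩ : MeasurableSpace Ω] {μ : Measure Ω}
    [IsFiniteMeasure μ] {f : Ω → ℝ} (hf : Measurable f) (C : ℝ)
    (h : ∀ ω, ‖f ω‖ ≤ C) : Integrable f μ :=
  (integrable_const C).mono' hf.aestronglyMeasurable (Filter.Eventually.of_forall h)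

lemma bound01 {Ω : Type*} {f : Ω → ℝ} (hb : ∀ ω, f ω = 0 ∨ f ω = 1) : ∀ ω, ‖f ω‖ ≤ 1 := by
  intro ω; rcases hb ω with h|h <;> simp [h]

lemma myCondexp_bdd01 {Ω : Type*} [mΩ : MeasurableSpace Ω] {μ : Measure Ω} [IsFiniteMeasure μ]
    {f : Ω → ℝ} (hfm : Measurable f) (hfb : ∀ ω, f ω = 0 ∨ f ω = 1)
    {H : MeasurableSpace Ω} (hH : H ≤ mΩ) :
    ∀ᵐ ω ∂μ, 0 ≤ (μ[f|H]) ω ∧ (μ[f|H]) ω ≤ 1 := by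
  have h0 : (0:Ω → ℝ) ≤ᵐ[μ] μ[f|H] :=
    condExp_nonneg (Filter.Eventually.of_forall fun ω => by rcases hfb ω with h|h <;> simp [h])
  have h1 : μ[f|H] ≤ᵐ[μ] μ[(fun _ => (1:ℝ))|H] := by
    refine condExp_mono (myIntegrable_of_bound (mΩ := mΩ) (μ := μ) hfm 1 (bound01 hfb)) (integrable_const 1) ?_
    exact Filter.Eventually.of_forall fun ω => by rcases hfb ω with h|h <;> simp [h]
  have hc : μ[(fun _ => (1:ℝ))|H] = fun _ => (1:ℝ) := condExp_const hH 1
  filter_upwards [h0, h1] with ω hω0 hω1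
  exact ⟨hω0, by simpa [hc] using hω1⟩

lemma indicator01 {Ω : Type*} {f : Ω → ℝ} (hb : ∀ ω, f ω = 0 ∨ f ω = 1) :
    f = (f ⁻¹' {1}).indicator (fun _ => (1:ℝ)) := by
  funext ω; rcases hb ω with h|h <;>
    simp [Set.indicator_apply, Set.mem_preimage, h]

lemma myCondexp_mul_of_condIndepFun_01 {Ω : Type*} {m' mΩ : MeasurableSpace Ω}
    [StandardBorelSpace Ω] {μ : Measure Ω} [IsFiniteMeasure μ] {hm' : m' ≤ mΩ} {X Y : Ω → ℝ}
    (hX : Measurable X) (hY : Measurable Y)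
    (hXb : ∀ ω, X ω = 0 ∨ X ω = 1) (hYb : ∀ ω, Y ω = 0 ∨ Y ω = 1)
    (h : CondIndepFun m' hm' X Y μ) :
    μ[fun ω => X ω * Y ω|m'] =ᵐ[μ] fun ω => (μ[X|m']) ω * (μ[Y|m']) ω := by
  have key := (condIndepFun_iff_condExp_inter_preimage_eq_mul hX hY).mp h {1} {1}
      (measurableSet_singleton 1) (measurableSet_singleton 1)
  have hXY : (fun ω => X ω * Y ω) =
      (X ⁻¹' {1} ∩ Y ⁻¹' {1}).indicator (fun _ => (1:ℝ)) := by
    funext ω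
    rcases hXb ω with h1|h1 <;> rcases hYb ω with h2|h2 <;>
      simp [Set.indicator_apply, Set.mem_preimage, h1, h2]
  calc μ[fun ω => X ω * Y ω|m'] = μ[(X ⁻¹' {1} ∩ Y ⁻¹' {1}).indicator (fun _ => (1:ℝ))|m'] := by
        rw [← hXY]
    _ =ᵐ[μ] fun ω => (μ⟦X ⁻¹' {1}|m'⟧) ω * (μ⟦Y ⁻¹' {1}|m'⟧) ω := key
    _ = fun ω => (μ[X|m']) ω * (μ[Y|m']) ω := by
        rw [← indicator01 hXb, ← indicator01 hYb]

lemma myCondexp_sup_comap {Ω : Type*} {H G mΩ : MeasurableSpace Ω}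
    [StandardBorelSpace Ω] {μ : Measure Ω} [IsProbabilityMeasure μ] {hH : H ≤ mΩ}
    {X Y : Ω → ℝ}
    (hX : Measurable X) (hY : Measurable Y)
    (hXb : ∀ ω, X ω = 0 ∨ X ω = 1) (hYb : ∀ ω, Y ω = 0 ∨ Y ω = 1)
    (hind : CondIndepFun H hH X Y μ)
    (hGdef : G = H ⊔ MeasurableSpace.comap X inferInstance)
    (hle : G ≤ mΩ) :
    μ[Y | G] =ᵐ[μ] μ[Y|H] := by
  classical
  have hHG : H ≤ G := hGdef ▸ le_sup_left
  have hintY : Integrable Y μ := myIntegrable_of_bound (μ := μ) hY 1 (bound01 hYb)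
  have hintX : Integrable X μ := myIntegrable_of_bound (μ := μ) hX 1 (bound01 hXb)
  have hintXY : Integrable (fun ω => X ω * Y ω) μ :=
    myIntegrable_of_bound (μ := μ) (hX.mul hY) 1
      (fun ω => by rcases hXb ω with h|h <;> rcases hYb ω with h2|h2 <;> simp [h, h2])
  have hbdd := myCondexp_bdd01 (μ := μ) hY hYb hH
  have hbdd1 : ∀ᵐ ω ∂μ, ‖(μ[Y|H]) ω‖ ≤ 1 := by
    filter_upwards [hbdd] with ω h; rw [Real.norm_eq_abs, abs_le]; constructor <;> linarith [h.1, h.2]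
  have hintmYX : Integrable (fun ω => (μ[Y|H]) ω * X ω) μ :=
    hintX.bdd_mul (stronglyMeasurable_condExp.mono hH).aestronglyMeasurable hbdd1
  have hintXmY : Integrable (fun ω => X ω * (μ[Y|H]) ω) μ :=
    hintmYX.congr (Filter.Eventually.of_forall fun ω => mul_comm _ _)
  have key : ∀ s : Set Ω, MeasurableSet[G] s →
      ∫ ω in s, (μ[Y|H]) ω ∂μ = ∫ ω in s, Y ω ∂μ := by
    set P : Set (Set Ω) :=
      {u | ∃ s t, MeasurableSet[H] s ∧
        MeasurableSet[MeasurableSpace.comap X inferInstance] t ∧ u = s ∩ t} with hPdef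
    have hGP : G = MeasurableSpace.generateFrom P := by
      rw [hGdef]
      apply le_antisymm
      · refine sup_le ?_ ?_
        · exact fun s hs => MeasurableSpace.measurableSet_generateFrom
            ⟨s, Set.univ, hs, MeasurableSet.univ, (Set.inter_univ s).symm⟩
        · exact fun t ht => MeasurableSpace.measurableSet_generateFrom
            ⟨Set.univ, t, MeasurableSet.univ, ht, (Set.univ_inter t).symm⟩
      · refine MeasurableSpace.generateFrom_le ?_
        rintro u ⟨s, t, hs, ht, rfl⟩
        exact ((le_sup_left : H ≤ H ⊔ MeasurableSpace.comap X inferInstance) s hs).inter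
          (le_sup_right (α := MeasurableSpace Ω) t ht)
    have hPpi : IsPiSystem P := by
      rintro u1 ⟨s1, t1, hs1, ht1, rfl⟩ u2 ⟨s2, t2, hs2, ht2, rfl⟩ _
      exact ⟨s1 ∩ s2, t1 ∩ t2, hs1.inter hs2, ht1.inter ht2, by
        rw [Set.inter_inter_inter_comm]⟩
    intro s hs
    refine MeasurableSpace.induction_on_inter (m := G)
      (C := fun u _ => ∫ ω in u, (μ[Y|H]) ω ∂μ = ∫ ω in u, Y ω ∂μ) hGP hPpi ?_ ?_ ?_ ?_ s hs
    · simp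
    · -- basic sets
      rintro u ⟨s, t, hs, ht, rfl⟩
      obtain ⟨B, hB, rfl⟩ := ht
      have htm : MeasurableSet[mΩ] (X ⁻¹' B) := hX hB
      have hsm : MeasurableSet[mΩ] s := hH s hs
      set a : ℝ := if (0:ℝ) ∈ B then (1:ℝ) else 0 with ha
      set b : ℝ := (if (1:ℝ) ∈ B then (1:ℝ) else 0) - a with hb
      have hindi : ∀ F : Ω → ℝ, ∀ ω, (X ⁻¹' B).indicator F ω = a * F ω + b * (X ω * F ω) := by
        intro F ω
        simp only [Set.indicator_apply, Set.mem_preimage, ha, hb]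
        rcases hXb ω with h|h <;> rw [h] <;>
          by_cases h0 : (0:ℝ) ∈ B <;> by_cases h1 : (1:ℝ) ∈ B <;>
            simp only [h0, h1, if_true, if_false] <;> ring
      have comp : ∀ F : Ω → ℝ, Integrable F μ → Integrable (fun ω => X ω * F ω) μ →
          ∫ ω in s ∩ X ⁻¹' B, F ω ∂μ
            = a * ∫ ω in s, F ω ∂μ + b * ∫ ω in s, X ω * F ω ∂μ := by
        intro F hF hXF
        rw [← setIntegral_indicator htm]
        calc ∫ ω in s, (X ⁻¹' B).indicator F ω ∂μ
            = ∫ ω in s, (a * F ω + b * (X ω * F ω)) ∂μ :=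
              setIntegral_congr_ae hsm (Filter.Eventually.of_forall fun ω _ => hindi F ω)
          _ = a * ∫ ω in s, F ω ∂μ + b * ∫ ω in s, X ω * F ω ∂μ := by
              rw [integral_add ((hF.integrableOn).const_mul a) ((hXF.integrableOn).const_mul b),
                integral_const_mul, integral_const_mul]
      have e1 : ∫ ω in s, (μ[Y|H]) ω ∂μ = ∫ ω in s, Y ω ∂μ := setIntegral_condExp hH hintY hs
      have e2 : ∫ ω in s, X ω * (μ[Y|H]) ω ∂μ = ∫ ω in s, X ω * Y ω ∂μ := by
        have p1 : μ[fun ω => X ω * Y ω|H] =ᵐ[μ] fun ω => (μ[X|H]) ω * (μ[Y|H]) ω :=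
          myCondexp_mul_of_condIndepFun_01 hX hY hXb hYb hind
        have p2 : μ[fun ω => (μ[Y|H]) ω * X ω|H] =ᵐ[μ] fun ω => (μ[Y|H]) ω * (μ[X|H]) ω := by
          have := condExp_stronglyMeasurable_mul_of_bound hH
            (stronglyMeasurable_condExp (f := Y) (m := H) (μ := μ)) hintX 1 hbdd1
          simpa [Pi.mul_def] using this
        calc ∫ ω in s, X ω * (μ[Y|H]) ω ∂μ = ∫ ω in s, (μ[Y|H]) ω * X ω ∂μ := by
              simp_rw [mul_comm]
          _ = ∫ ω in s, (μ[fun ω' => (μ[Y|H]) ω' * X ω'|H]) ω ∂μ :=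
              (setIntegral_condExp hH hintmYX hs).symm
          _ = ∫ ω in s, (μ[Y|H]) ω * (μ[X|H]) ω ∂μ :=
              setIntegral_congr_ae hsm (p2.mono fun ω h _ => h)
          _ = ∫ ω in s, (μ[fun ω' => X ω' * Y ω'|H]) ω ∂μ := by
              refine (setIntegral_congr_ae hsm (p1.mono fun ω h _ => ?_)).symm
              rw [h, mul_comm]
          _ = ∫ ω in s, X ω * Y ω ∂μ := setIntegral_condExp hH hintXY hs
      rw [comp Y hintY hintXY, comp _ integrable_condExp hintXmY, e1, e2]
    · -- complement
      intro t htG hC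
      have htm : MeasurableSet[mΩ] t := hle t htG
      have d1 := integral_add_compl htm (integrable_condExp (f := Y) (m := H) (μ := μ))
      have d2 := integral_add_compl htm hintY
      have d3 : ∫ ω, (μ[Y|H]) ω ∂μ = ∫ ω, Y ω ∂μ := integral_condExp hH
      linarith
    · -- disjoint unions
      intro f hdisj hmeas hC
      have hm' : ∀ i, MeasurableSet[mΩ] (f i) := fun i => hle _ (hmeas i)
      rw [integral_iUnion hm' hdisj integrable_condExp.integrableOn,
        integral_iUnion hm' hdisj hintY.integrableOn]
      exact tsum_congr hC
  refine (ae_eq_condExp_of_forall_setIntegral_eq hle hintY ?_ ?_ ?_).symm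
  · exact fun s _ _ => integrable_condExp.integrableOn
  · exact fun s hs _ => key s hs
  · exact (stronglyMeasurable_condExp.mono hHG).aestronglyMeasurable

lemma myIntegrable_mul_condexp {Ω : Type*} {H mΩ : MeasurableSpace Ω} {μ : Measure Ω}
    [IsProbabilityMeasure μ] (hH : H ≤ mΩ)
    {g f : Ω → ℝ} (hgm : StronglyMeasurable[H] g) (hg0 : ∀ ω, 0 ≤ g ω)
    (hfm : Measurable f) (hf0 : ∀ ω, 0 ≤ f ω) (hf1 : ∀ ω, f ω ≤ 1)
    (hgf : ∀ᵐ ω ∂μ, g ω * (μ[f|H]) ω ≤ 1) :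
    Integrable (fun ω => g ω * f ω) μ := by
  have hgmΩ : Measurable g := (hgm.mono hH).measurable
  have hintf : Integrable f μ := myIntegrable_of_bound hfm 1
    (fun ω => by rw [Real.norm_eq_abs, abs_le]; exact ⟨by linarith [hf0 ω], hf1 ω⟩)
  have hm0 : ∀ᵐ ω ∂μ, 0 ≤ (μ[f|H]) ω := condExp_nonneg (Filter.Eventually.of_forall hf0)
  have hgnm : ∀ n : ℕ, StronglyMeasurable[H] (fun ω => min (g ω) n) :=
    fun n => (Measurable.stronglyMeasurable (Measurable.min (hgm.measurable) (@measurable_const ℝ Ω _ H _)))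
  have hgnb : ∀ n : ℕ, ∀ ω, ‖min (g ω) (n:ℝ)‖ ≤ n := by
    intro n ω; rw [Real.norm_eq_abs, abs_le]
    constructor
    · have := hg0 ω; have : (0:ℝ) ≤ min (g ω) n := le_min this (Nat.cast_nonneg n)
      linarith
    · exact min_le_right _ _
  have hint : ∀ n : ℕ, Integrable (fun ω => min (g ω) n * f ω) μ := by
    intro n
    refine myIntegrable_of_bound ((hgmΩ.min measurable_const).mul hfm) n (fun ω => ?_)
    calc ‖min (g ω) n * f ω‖ = ‖min (g ω) (n:ℝ)‖ * ‖f ω‖ := norm_mul _ _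
      _ ≤ n * 1 := by
          refine mul_le_mul (hgnb n ω) ?_ (norm_nonneg _) (Nat.cast_nonneg n)
          rw [Real.norm_eq_abs, abs_le]; exact ⟨by linarith [hf0 ω], hf1 ω⟩
      _ = n := mul_one _
  have hpull : ∀ n : ℕ, μ[fun ω => min (g ω) n * f ω|H]
      =ᵐ[μ] fun ω => min (g ω) n * (μ[f|H]) ω := by
    intro n
    have := condExp_stronglyMeasurable_mul_of_bound hH (hgnm n) hintf n
      (Filter.Eventually.of_forall (hgnb n))
    simpa [Pi.mul_def] using this
  have hIb : ∀ n : ℕ, ∫ ω, min (g ω) n * f ω ∂μ ≤ 1 := by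
    intro n
    have hib : Integrable (fun ω => min (g ω) n * (μ[f|H]) ω) μ :=
      integrable_condExp.bdd_mul
        (((hgmΩ.min measurable_const)).aestronglyMeasurable)
        (Filter.Eventually.of_forall (hgnb n))
    calc ∫ ω, min (g ω) n * f ω ∂μ
        = ∫ ω, (μ[fun ω' => min (g ω') n * f ω'|H]) ω ∂μ := (integral_condExp hH).symm
      _ = ∫ ω, min (g ω) n * (μ[f|H]) ω ∂μ := integral_congr_ae (hpull n)
      _ ≤ ∫ _ω, (1:ℝ) ∂μ := by
          refine integral_mono_ae hib (integrable_const 1) ?_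
          filter_upwards [hgf, hm0] with ω h1 h2
          calc min (g ω) n * (μ[f|H]) ω ≤ g ω * (μ[f|H]) ω :=
                mul_le_mul_of_nonneg_right (min_le_left _ _) h2
            _ ≤ 1 := h1
      _ = 1 := by simp
  refine ⟨(hgmΩ.mul hfm).aestronglyMeasurable, ?_⟩
  rw [hasFiniteIntegral_iff_ofReal
    (Filter.Eventually.of_forall (fun ω => mul_nonneg (hg0 ω) (hf0 ω)))]
  have hsup : ∀ ω, ⨆ n : ℕ, ENNReal.ofReal (min (g ω) n * f ω)
      = ENNReal.ofReal (g ω * f ω) := by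
    intro ω
    apply le_antisymm
    · exact iSup_le fun n => ENNReal.ofReal_le_ofReal
        (mul_le_mul_of_nonneg_right (min_le_left _ _) (hf0 ω))
    · obtain ⟨n, hn⟩ := exists_nat_ge (g ω)
      exact le_iSup_of_le n (by rw [min_eq_left hn])
  have hkey : ∫⁻ ω, ENNReal.ofReal (g ω * f ω) ∂μ ≤ 1 := by
    have := lintegral_iSup (μ := μ)
      (f := fun n ω => ENNReal.ofReal (min (g ω) n * f ω))
      (fun n => ((hgmΩ.min measurable_const).mul hfm).ennreal_ofReal)
      (fun n m hnm ω => ENNReal.ofReal_le_ofReal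
        (mul_le_mul_of_nonneg_right
          (min_le_min le_rfl (Nat.cast_le.mpr hnm)) (hf0 ω)))
    calc ∫⁻ ω, ENNReal.ofReal (g ω * f ω) ∂μ
        = ∫⁻ ω, ⨆ n : ℕ, ENNReal.ofReal (min (g ω) n * f ω) ∂μ := by
          simp_rw [hsup]
      _ = ⨆ n : ℕ, ∫⁻ ω, ENNReal.ofReal (min (g ω) n * f ω) ∂μ := this
      _ ≤ 1 := by
          refine iSup_le fun n => ?_
          rw [← ofReal_integral_eq_lintegral_ofReal (hint n)
            (Filter.Eventually.of_forall fun ω => mul_nonneg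
              (le_min (hg0 ω) (Nat.cast_nonneg n)) (hf0 ω))]
          calc ENNReal.ofReal (∫ ω, min (g ω) n * f ω ∂μ)
              ≤ ENNReal.ofReal 1 := ENNReal.ofReal_le_ofReal (hIb n)
            _ = 1 := ENNReal.ofReal_one
  exact lt_of_le_of_lt hkey ENNReal.one_lt_top



lemma sum_edges {N : Type*} [Fintype N] [DecidableEq N] (E : Finset (N × N)) (F : N → N → ℝ) :
    ∑ j, ∑ i ∈ Finset.univ.filter (fun i => (i, j) ∈ E), F i j = ∑ p ∈ E, F p.1 p.2 := by
  classical
  have h1 : ∀ j, ∑ i ∈ Finset.univ.filter (fun i => (i, j) ∈ E), F i j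
      = ∑ i, if (i, j) ∈ E then F i j else 0 := fun j => Finset.sum_filter _ _
  simp_rw [h1]
  rw [Finset.sum_comm]
  rw [← Finset.sum_product' (f := fun i j => if (i, j) ∈ E then F i j else 0)]
  rw [Finset.univ_product_univ]
  calc ∑ p : N × N, (if (p.1, p.2) ∈ E then F p.1 p.2 else 0)
      = ∑ p : N × N, (if p ∈ E then F p.1 p.2 else 0) := by
        apply Finset.sum_congr rfl; intro p _; rfl
    _ = ∑ p ∈ Finset.univ ∩ E, F p.1 p.2 := Finset.sum_ite_mem _ _ _
    _ = ∑ p ∈ E, F p.1 p.2 := by rw [Finset.univ_inter]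

lemma sum_split {α : Type*} [DecidableEq α] (A B : Finset α) (q : α → ℝ) :
    ∑ p ∈ A, q p - ∑ p ∈ B, q p = ∑ p ∈ A \ B, q p - ∑ p ∈ B \ A, q p := by
  classical
  have hA := Finset.sum_filter_add_sum_filter_not A (· ∈ B) q
  have hB := Finset.sum_filter_add_sum_filter_not B (· ∈ A) q
  have e1 : A.filter (· ∈ B) = A ∩ B := Finset.filter_mem_eq_inter
  have e2 : A.filter (· ∉ B) = A \ B := (Finset.sdiff_eq_filter A B).symm
  have e3 : B.filter (· ∈ A) = B ∩ A := Finset.filter_mem_eq_inter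
  have e4 : B.filter (· ∉ A) = B \ A := (Finset.sdiff_eq_filter B A).symm
  rw [e1, e2] at hA; rw [e3, e4] at hB
  have : A ∩ B = B ∩ A := Finset.inter_comm A B
  rw [← hA, ← hB, this]; ring

lemma cov_div {Ω : Type*} {H mΩ : MeasurableSpace Ω}
    {μ : Measure Ω} [IsProbabilityMeasure μ] (hH : H ≤ mΩ)
    {Xi Yj Y1i : Ω → ℝ}
    (hXim : Measurable Xi) (hYjm : Measurable Yj) (hY1m : Measurable Y1i)
    (hXib : ∀ ω, Xi ω = 0 ∨ Xi ω = 1) (hYjb : ∀ ω, Yj ω = 0 ∨ Yj ω = 1)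
    (hY1b : ∀ ω, Y1i ω = 0 ∨ Y1i ω = 1)
    (hirr : ∀ᵐ ω ∂μ, Y1i ω * (1 - Xi ω) = Y1i ω)
    (hμ1 : ∀ᵐ ω ∂μ, 0 < 1 - (μ[Xi|H]) ω) :
    condCov μ H (fun ω' => Y1i ω' / (1 - (μ[Xi|H]) ω')) Yj
      =ᵐ[μ] fun ω => condCov μ H Y1i Yj ω / (1 - (μ[Xi|H]) ω) := by
  set mi : Ω → ℝ := μ[Xi|H] with hmi
  set g : Ω → ℝ := fun ω => max ((1 - mi ω)⁻¹) 0 with hgdef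
  have hgm' : Measurable[H] g := by
    exact ((measurable_const.sub stronglyMeasurable_condExp.measurable).inv).max measurable_const
  have hg_sm : StronglyMeasurable[H] g := hgm'.stronglyMeasurable
  have hgmΩ : Measurable g := hgm'.mono hH le_rfl
  have hg0 : ∀ ω, 0 ≤ g ω := fun ω => le_max_right _ _
  have hgi : ∀ᵐ ω ∂μ, g ω = (1 - mi ω)⁻¹ ∧ g ω * (1 - mi ω) = 1 := by
    filter_upwards [hμ1] with ω h
    have h1 : (0:ℝ) < (1 - mi ω)⁻¹ := inv_pos.mpr h
    constructor
    · rw [hgdef]; exact max_eq_left h1.le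
    · rw [hgdef]; simp only [max_eq_left h1.le]
      exact inv_mul_cancel₀ (ne_of_gt h)
  -- fI = 1 - Xi
  have hfIm : Measurable (fun ω => 1 - Xi ω) := measurable_const.sub hXim
  have hfI0 : ∀ ω, 0 ≤ 1 - Xi ω := fun ω => by rcases hXib ω with h|h <;> simp [h]
  have hfI1 : ∀ ω, 1 - Xi ω ≤ 1 := fun ω => by rcases hXib ω with h|h <;> simp [h]
  have hmfI : μ[fun ω => 1 - Xi ω|H] =ᵐ[μ] fun ω => 1 - mi ω := by
    have h1 : (fun ω : Ω => 1 - Xi ω) = (fun _ : Ω => (1:ℝ)) - Xi := rfl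
    rw [h1]
    have h2 := condExp_sub (μ := μ) (m := H) (integrable_const (1:ℝ))
      (myIntegrable_of_bound hXim 1 (bound01 hXib))
    refine h2.trans ?_
    rw [condExp_const hH]
    exact Filter.Eventually.of_forall fun ω => by simp [hmi]
  have hintgf : Integrable (fun ω => g ω * (1 - Xi ω)) μ := by
    refine myIntegrable_mul_condexp hH hg_sm hg0 hfIm hfI0 hfI1 ?_
    filter_upwards [hgi, hmfI] with ω h1 h2
    rw [h2]; exact le_of_eq h1.2
  have hdom : ∀ h : Ω → ℝ, Measurable h → (∀ᵐ ω ∂μ, 0 ≤ h ω ∧ h ω ≤ 1 - Xi ω) →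
      Integrable (fun ω => g ω * h ω) μ := by
    intro h hm hb
    refine hintgf.mono' ((hgmΩ.mul hm).aestronglyMeasurable) ?_
    filter_upwards [hb] with ω hω
    rw [Real.norm_eq_abs, abs_mul, abs_of_nonneg (hg0 ω), abs_of_nonneg hω.1]
    exact mul_le_mul_of_nonneg_left hω.2 (hg0 ω)
  have hY1le : ∀ᵐ ω ∂μ, 0 ≤ Y1i ω ∧ Y1i ω ≤ 1 - Xi ω := by
    filter_upwards [hirr] with ω h
    rcases hY1b ω with h1|h1
    · exact ⟨le_of_eq h1.symm, by rw [h1]; exact hfI0 ω⟩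
    · refine ⟨by rw [h1]; norm_num, ?_⟩
      rw [h1] at h ⊢; linarith [h]
  have hintY1 : Integrable Y1i μ := myIntegrable_of_bound hY1m 1 (bound01 hY1b)
  have hintY1Yj : Integrable (fun ω => Y1i ω * Yj ω) μ :=
    myIntegrable_of_bound (hY1m.mul hYjm) 1
      (fun ω => by rcases hY1b ω with h|h <;> rcases hYjb ω with h2|h2 <;> simp [h, h2])
  have hintgY1 : Integrable (fun ω => g ω * Y1i ω) μ := hdom Y1i hY1m hY1le
  have hintgY1Yj : Integrable (fun ω => g ω * (Y1i ω * Yj ω)) μ := by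
    refine hdom _ (hY1m.mul hYjm) ?_
    filter_upwards [hY1le] with ω h
    rcases hYjb ω with h2|h2
    · rw [h2, mul_zero]; exact ⟨le_refl _, hfI0 ω⟩
    · rw [h2, mul_one]; exact h
  have P1 : μ[fun ω => g ω * Y1i ω|H] =ᵐ[μ] fun ω => g ω * (μ[Y1i|H]) ω := by
    have := condExp_mul_of_stronglyMeasurable_left hg_sm
      (by simpa [Pi.mul_def] using hintgY1) hintY1
    simpa [Pi.mul_def] using this
  have P2 : μ[fun ω => g ω * (Y1i ω * Yj ω)|H]
      =ᵐ[μ] fun ω => g ω * (μ[fun ω' => Y1i ω' * Yj ω'|H]) ω := by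
    have := condExp_mul_of_stronglyMeasurable_left hg_sm
      (by simpa [Pi.mul_def] using hintgY1Yj) hintY1Yj
    simpa [Pi.mul_def] using this
  have hdiv1 : (fun ω' => Y1i ω' / (1 - mi ω')) =ᵐ[μ] fun ω => g ω * Y1i ω := by
    filter_upwards [hgi] with ω h
    rw [div_eq_inv_mul, ← h.1, mul_comm]
  have hdiv2 : (fun ω' => Y1i ω' / (1 - mi ω') * Yj ω')
      =ᵐ[μ] fun ω => g ω * (Y1i ω * Yj ω) := by
    filter_upwards [hgi] with ω h
    rw [div_eq_inv_mul, ← h.1]; ring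
  have E1 : μ[fun ω' => Y1i ω' / (1 - mi ω') * Yj ω'|H]
      =ᵐ[μ] fun ω => g ω * (μ[fun ω' => Y1i ω' * Yj ω'|H]) ω :=
    (condExp_congr_ae hdiv2).trans P2
  have E2 : μ[fun ω' => Y1i ω' / (1 - mi ω')|H]
      =ᵐ[μ] fun ω => g ω * (μ[Y1i|H]) ω :=
    (condExp_congr_ae hdiv1).trans P1
  filter_upwards [E1, E2, hgi] with ω e1 e2 hg
  simp only [condCov, e1, e2]
  rw [hg.1]
  ring

lemma cov_plain {Ω : Type*} {H G mΩ : MeasurableSpace Ω} [StandardBorelSpace Ω]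
    {μ : Measure Ω} [IsProbabilityMeasure μ] (hH : H ≤ mΩ)
    {Xi Yj Y1i S1 S0 : Ω → ℝ}
    (hXim : Measurable Xi) (hYjm : Measurable Yj) (hY1m : Measurable Y1i)
    (hS1m : Measurable S1) (hS0m : Measurable S0)
    (hXib : ∀ ω, Xi ω = 0 ∨ Xi ω = 1) (hYjb : ∀ ω, Yj ω = 0 ∨ Yj ω = 1)
    (hY1b : ∀ ω, Y1i ω = 0 ∨ Y1i ω = 1)
    (hS1b : ∀ ω, S1 ω = 0 ∨ S1 ω = 1) (hS0b : ∀ ω, S0 ω = 0 ∨ S0 ω = 1)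
    (hirr : ∀ᵐ ω ∂μ, Y1i ω * (1 - Xi ω) = Y1i ω)
    (hcons1 : ∀ᵐ ω ∂μ, Y1i ω * Yj ω = S1 ω * Yj ω)
    (hcons0 : ∀ᵐ ω ∂μ, Y1i ω * (1 - Yj ω) = S0 ω * (1 - Yj ω))
    (hci0 : CondIndepFun H hH Xi Yj μ)
    (hGdef : G = H ⊔ MeasurableSpace.comap Xi inferInstance)
    (hle : G ≤ mΩ)
    (hciY : CondIndepFun G hle (fun ω => (S1 ω, S0 ω)) Yj μ) :
    condCov μ H Y1i Yj =ᵐ[μ]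
      fun ω => (μ[Yj|H]) ω * (1 - (μ[Yj|H]) ω) *
        ((μ[fun ω' => (1 - Xi ω') * S1 ω'|H]) ω - (μ[fun ω' => (1 - Xi ω') * S0 ω'|H]) ω) := by
  have hHG : H ≤ G := hGdef ▸ le_sup_left
  -- integrability
  have intYj : Integrable Yj μ := myIntegrable_of_bound hYjm 1 (bound01 hYjb)
  have intY1 : Integrable Y1i μ := myIntegrable_of_bound hY1m 1 (bound01 hY1b)
  have intS1 : Integrable S1 μ := myIntegrable_of_bound hS1m 1 (bound01 hS1b)
  have intS0 : Integrable S0 μ := myIntegrable_of_bound hS0m 1 (bound01 hS0b)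
  have mul01 : ∀ {u v : Ω → ℝ}, (∀ ω, u ω = 0 ∨ u ω = 1) → (∀ ω, v ω = 0 ∨ v ω = 1) →
      ∀ ω, u ω * v ω = 0 ∨ u ω * v ω = 1 := by
    intro u v hu hv ω; rcases hu ω with h|h <;> rcases hv ω with h2|h2 <;> simp [h, h2]
  have hfIb : ∀ ω, 1 - Xi ω = 0 ∨ 1 - Xi ω = 1 := by
    intro ω; rcases hXib ω with h|h <;> simp [h]
  have hmYjb : ∀ ω, 1 - Yj ω = 0 ∨ 1 - Yj ω = 1 := by
    intro ω; rcases hYjb ω with h|h <;> simp [h]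
  have hfIm : Measurable (fun ω => 1 - Xi ω) := measurable_const.sub hXim
  have hmYjm : Measurable (fun ω => 1 - Yj ω) := measurable_const.sub hYjm
  have intY1Yj : Integrable (fun ω => Y1i ω * Yj ω) μ :=
    myIntegrable_of_bound (hY1m.mul hYjm) 1 (bound01 (mul01 hY1b hYjb))
  have intY1mYj : Integrable (fun ω => Y1i ω * (1 - Yj ω)) μ :=
    myIntegrable_of_bound (hY1m.mul hmYjm) 1 (bound01 (mul01 hY1b hmYjb))
  have intS1Yj : Integrable (fun ω => S1 ω * Yj ω) μ :=
    myIntegrable_of_bound (hS1m.mul hYjm) 1 (bound01 (mul01 hS1b hYjb))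
  have intS0Yj : Integrable (fun ω => S0 ω * Yj ω) μ :=
    myIntegrable_of_bound (hS0m.mul hYjm) 1 (bound01 (mul01 hS0b hYjb))
  have intfIS1 : Integrable (fun ω => (1 - Xi ω) * S1 ω) μ :=
    myIntegrable_of_bound (hfIm.mul hS1m) 1 (bound01 (mul01 hfIb hS1b))
  have intfIS0 : Integrable (fun ω => (1 - Xi ω) * S0 ω) μ :=
    myIntegrable_of_bound (hfIm.mul hS0m) 1 (bound01 (mul01 hfIb hS0b))
  -- G-measurability of 1 - Xi
  have hXiG : Measurable[G] Xi := by
    have h1 : Measurable[MeasurableSpace.comap Xi inferInstance] Xi :=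
      Measurable.of_comap_le le_rfl
    exact h1.mono (hGdef ▸ le_sup_right) le_rfl
  have hfIG : StronglyMeasurable[G] (fun ω => 1 - Xi ω) :=
    (measurable_const.sub hXiG).stronglyMeasurable
  -- conditional independence consequences
  have mjG : μ[Yj|G] =ᵐ[μ] μ[Yj|H] :=
    myCondexp_sup_comap hXim hYjm hXib hYjb hci0 hGdef hle
  have S1ind : CondIndepFun G hle S1 Yj μ := by
    have := hciY.comp measurable_fst measurable_id
    exact this
  have S0ind : CondIndepFun G hle S0 Yj μ := by
    have := hciY.comp measurable_snd measurable_id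
    exact this
  have mulS1 : μ[fun ω => S1 ω * Yj ω|G] =ᵐ[μ] fun ω => (μ[S1|G]) ω * (μ[Yj|G]) ω :=
    myCondexp_mul_of_condIndepFun_01 (hm' := hle) hS1m hYjm hS1b hYjb S1ind
  have mulS0 : μ[fun ω => S0 ω * Yj ω|G] =ᵐ[μ] fun ω => (μ[S0|G]) ω * (μ[Yj|G]) ω :=
    myCondexp_mul_of_condIndepFun_01 (hm' := hle) hS0m hYjm hS0b hYjb S0ind
  -- a.e. bounds on condexps
  have hmjb := myCondexp_bdd01 (μ := μ) hYjm hYjb hH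
  have hmjn : ∀ᵐ ω ∂μ, ‖(μ[Yj|H]) ω‖ ≤ 1 := by
    filter_upwards [hmjb] with ω h; rw [Real.norm_eq_abs, abs_le]; exact ⟨by linarith [h.1], h.2⟩
  have hmjn' : ∀ᵐ ω ∂μ, ‖1 - (μ[Yj|H]) ω‖ ≤ 1 := by
    filter_upwards [hmjb] with ω h; rw [Real.norm_eq_abs, abs_le]
    constructor <;> linarith [h.1, h.2]
  -- generic: inner computation at level G and outer pull-out at level H
  have main : ∀ (S W : Ω → ℝ), Measurable S → (∀ ω, S ω = 0 ∨ S ω = 1) →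
      Integrable (fun ω => S ω * W ω) μ → Integrable (fun ω => (1 - Xi ω) * S ω) μ →
      (∀ᵐ ω ∂μ, Y1i ω * W ω = (1 - Xi ω) * (S ω * W ω)) →
      (μ[fun ω => S ω * W ω|G] =ᵐ[μ] fun ω => (μ[S|G]) ω * (μ[W|G]) ω) →
      (μ[W|G] =ᵐ[μ] μ[W|H]) →
      StronglyMeasurable[H] (μ[W|H]) →
      (∀ᵐ ω ∂μ, ‖(μ[W|H]) ω‖ ≤ 1) →
      Integrable (fun ω => Y1i ω * W ω) μ →
      μ[fun ω => Y1i ω * W ω|H] =ᵐ[μ]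
        fun ω => (μ[W|H]) ω * (μ[fun ω' => (1 - Xi ω') * S ω'|H]) ω := by
    intro S W hSm hSb intSW intfIS ha hmulS hWG hWH_sm hWH_bd intY1W
    have intS : Integrable S μ := myIntegrable_of_bound hSm 1 (bound01 hSb)
    -- pull-out of (1 - Xi) at level G (two instances)
    have pullG : μ[fun ω => (1 - Xi ω) * (S ω * W ω)|G]
        =ᵐ[μ] fun ω => (1 - Xi ω) * (μ[fun ω' => S ω' * W ω'|G]) ω := by
      have := condExp_stronglyMeasurable_mul_of_bound hle hfIG intSW 1
        (Filter.Eventually.of_forall (bound01 hfIb))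
      simpa [Pi.mul_def] using this
    have pullG2 : μ[fun ω => (1 - Xi ω) * S ω|G]
        =ᵐ[μ] fun ω => (1 - Xi ω) * (μ[S|G]) ω := by
      have := condExp_stronglyMeasurable_mul_of_bound hle hfIG intS 1
        (Filter.Eventually.of_forall (bound01 hfIb))
      simpa [Pi.mul_def] using this
    -- inner identity at G
    have inner : μ[fun ω => Y1i ω * W ω|G]
        =ᵐ[μ] fun ω => (μ[W|H]) ω * ((1 - Xi ω) * (μ[S|G]) ω) := by
      calc μ[fun ω => Y1i ω * W ω|G]
          =ᵐ[μ] μ[fun ω => (1 - Xi ω) * (S ω * W ω)|G] := condExp_congr_ae ha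
        _ =ᵐ[μ] fun ω => (1 - Xi ω) * (μ[fun ω' => S ω' * W ω'|G]) ω := pullG
        _ =ᵐ[μ] fun ω => (μ[W|H]) ω * ((1 - Xi ω) * (μ[S|G]) ω) := by
            filter_upwards [hmulS, hWG] with ω h1 h2
            simp only [h1, h2]; ring
    -- integrability of the inner rhs pieces
    have intfImS : Integrable (fun ω => (1 - Xi ω) * (μ[S|G]) ω) μ :=
      integrable_condExp.bdd_mul hfIm.aestronglyMeasurable
        (Filter.Eventually.of_forall (bound01 hfIb))
    -- outer pull-out of μ[W|H] at level H
    have outer : μ[fun ω => (μ[W|H]) ω * ((1 - Xi ω) * (μ[S|G]) ω)|H]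
        =ᵐ[μ] fun ω => (μ[W|H]) ω * (μ[fun ω' => (1 - Xi ω') * (μ[S|G]) ω'|H]) ω := by
      have := condExp_stronglyMeasurable_mul_of_bound hH hWH_sm intfImS 1 hWH_bd
      simpa [Pi.mul_def] using this
    have towS : μ[fun ω' => (1 - Xi ω') * (μ[S|G]) ω'|H]
        =ᵐ[μ] μ[fun ω' => (1 - Xi ω') * S ω'|H] := by
      calc μ[fun ω' => (1 - Xi ω') * (μ[S|G]) ω'|H]
          =ᵐ[μ] μ[μ[fun ω' => (1 - Xi ω') * S ω'|G]|H] := condExp_congr_ae pullG2.symm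
        _ =ᵐ[μ] μ[fun ω' => (1 - Xi ω') * S ω'|H] := condExp_condExp_of_le hHG hle
    calc μ[fun ω => Y1i ω * W ω|H]
        =ᵐ[μ] μ[μ[fun ω => Y1i ω * W ω|G]|H] := (condExp_condExp_of_le hHG hle).symm
      _ =ᵐ[μ] μ[fun ω => (μ[W|H]) ω * ((1 - Xi ω) * (μ[S|G]) ω)|H] := condExp_congr_ae inner
      _ =ᵐ[μ] fun ω => (μ[W|H]) ω * (μ[fun ω' => (1 - Xi ω') * (μ[S|G]) ω'|H]) ω := outer
      _ =ᵐ[μ] fun ω => (μ[W|H]) ω * (μ[fun ω' => (1 - Xi ω') * S ω'|H]) ω := by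
          filter_upwards [towS] with ω h; rw [h]
  -- apply `main` with W = Yj, S = S1
  have C1 : μ[fun ω => Y1i ω * Yj ω|H] =ᵐ[μ]
      fun ω => (μ[Yj|H]) ω * (μ[fun ω' => (1 - Xi ω') * S1 ω'|H]) ω := by
    refine main S1 Yj hS1m hS1b intS1Yj intfIS1 ?_ mulS1 mjG stronglyMeasurable_condExp hmjn intY1Yj
    filter_upwards [hirr, hcons1] with ω h hc
    linear_combination (1 - Xi ω) * hc - Yj ω * h
  -- apply `main` with W = 1 - Yj, S = S0
  have hWG0 : μ[fun ω => 1 - Yj ω|G] =ᵐ[μ] μ[fun ω => 1 - Yj ω|H] := by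
    have e1 : μ[fun ω => 1 - Yj ω|G] =ᵐ[μ] fun ω => 1 - (μ[Yj|G]) ω := by
      have h1 : (fun ω : Ω => 1 - Yj ω) = (fun _ : Ω => (1:ℝ)) - Yj := rfl
      rw [h1]
      refine (condExp_sub (m := G) (integrable_const 1) intYj).trans ?_
      rw [condExp_const hle]
      exact Filter.Eventually.of_forall fun ω => by simp
    have e2 : μ[fun ω => 1 - Yj ω|H] =ᵐ[μ] fun ω => 1 - (μ[Yj|H]) ω := by
      have h1 : (fun ω : Ω => 1 - Yj ω) = (fun _ : Ω => (1:ℝ)) - Yj := rfl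
      rw [h1]
      refine (condExp_sub (m := H) (integrable_const 1) intYj).trans ?_
      rw [condExp_const hH]
      exact Filter.Eventually.of_forall fun ω => by simp
    refine e1.trans (.trans ?_ e2.symm)
    filter_upwards [mjG] with ω h; rw [h]
  have e2' : μ[fun ω => 1 - Yj ω|H] =ᵐ[μ] fun ω => 1 - (μ[Yj|H]) ω := by
    have h1 : (fun ω : Ω => 1 - Yj ω) = (fun _ : Ω => (1:ℝ)) - Yj := rfl
    rw [h1]
    refine (condExp_sub (m := H) (integrable_const 1) intYj).trans ?_
    rw [condExp_const hH]
    exact Filter.Eventually.of_forall fun ω => by simp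
  have mulS0' : μ[fun ω => S0 ω * (1 - Yj ω)|G] =ᵐ[μ]
      fun ω => (μ[S0|G]) ω * (μ[fun ω' => 1 - Yj ω'|G]) ω := by
    have hfun : (fun ω => S0 ω * (1 - Yj ω)) = (fun ω => S0 ω - S0 ω * Yj ω) :=
      funext fun ω => by ring
    have hsub : μ[fun ω => S0 ω - S0 ω * Yj ω|G] =ᵐ[μ]
        fun ω => (μ[S0|G]) ω - (μ[fun ω' => S0 ω' * Yj ω'|G]) ω := by
      have := condExp_sub (m := G) intS0 intS0Yj
      simpa [Pi.sub_def] using this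
    have e1 : μ[fun ω => 1 - Yj ω|G] =ᵐ[μ] fun ω => 1 - (μ[Yj|G]) ω := by
      have h1 : (fun ω : Ω => 1 - Yj ω) = (fun _ : Ω => (1:ℝ)) - Yj := rfl
      rw [h1]
      refine (condExp_sub (m := G) (integrable_const 1) intYj).trans ?_
      rw [condExp_const hle]
      exact Filter.Eventually.of_forall fun ω => by simp
    rw [hfun]
    refine hsub.trans ?_
    filter_upwards [mulS0, e1] with ω h1 h2
    simp only [h1, h2]; ring
  have intS0mYj : Integrable (fun ω => S0 ω * (1 - Yj ω)) μ :=
    myIntegrable_of_bound (hS0m.mul hmYjm) 1 (bound01 (mul01 hS0b hmYjb))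
  have hWH_sm0 : StronglyMeasurable[H] (μ[fun ω => 1 - Yj ω|H]) := stronglyMeasurable_condExp
  have hWH_bd0 : ∀ᵐ ω ∂μ, ‖(μ[fun ω => 1 - Yj ω|H]) ω‖ ≤ 1 := by
    filter_upwards [e2', hmjb] with ω h hb
    rw [h, Real.norm_eq_abs, abs_le]; constructor <;> linarith [hb.1, hb.2]
  have C0 : μ[fun ω => Y1i ω * (1 - Yj ω)|H] =ᵐ[μ]
      fun ω => (μ[fun ω' => 1 - Yj ω'|H]) ω * (μ[fun ω' => (1 - Xi ω') * S0 ω'|H]) ω := by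
    refine main S0 (fun ω => 1 - Yj ω) hS0m hS0b intS0mYj intfIS0 ?_ mulS0' hWG0 hWH_sm0
      hWH_bd0 intY1mYj
    filter_upwards [hirr, hcons0] with ω h hc
    linear_combination (1 - Xi ω) * hc - (1 - Yj ω) * h
  -- decompose μ[Y1i|H]
  have C2 : μ[Y1i|H] =ᵐ[μ] fun ω =>
      (μ[Yj|H]) ω * (μ[fun ω' => (1 - Xi ω') * S1 ω'|H]) ω
        + (1 - (μ[Yj|H]) ω) * (μ[fun ω' => (1 - Xi ω') * S0 ω'|H]) ω := by
    have hsplit : Y1i = fun ω => Y1i ω * Yj ω + Y1i ω * (1 - Yj ω) :=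
      funext fun ω => by ring
    have hadd : μ[fun ω => Y1i ω * Yj ω + Y1i ω * (1 - Yj ω)|H] =ᵐ[μ]
        fun ω => (μ[fun ω' => Y1i ω' * Yj ω'|H]) ω + (μ[fun ω' => Y1i ω' * (1 - Yj ω')|H]) ω := by
      have := condExp_add (m := H) intY1Yj intY1mYj
      simpa [Pi.add_def] using this
    calc μ[Y1i|H] = μ[fun ω => Y1i ω * Yj ω + Y1i ω * (1 - Yj ω)|H] := by rw [← hsplit]
      _ =ᵐ[μ] _ := hadd
      _ =ᵐ[μ] _ := by
          filter_upwards [C1, C0, e2'] with ω h1 h0 he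
          rw [h1, h0, he]
  filter_upwards [C1, C2] with ω h1 h2
  simp only [condCov, h1, h2]
  ring

/-- second inequality of Lemma 2.2 of He–Song, "Measuring Diffusion over a
Large Network".  With a latent causal graph `G∘ = (N, E∘)` and an observed proxy graph
`G = (N, E_G)`, under irreversible state changes, the unconfoundedness condition (B),
vanishing covariances along non-causal proxy edges, and nonnegativity of the spillover
effects on the untreated along missed causal edges, the covariance measure `C_G^I` is a
lower bound for the diffusion on the untreated `D^I`, almost surely. -/
theorem stmt5 {Ω : Type*} [mΩ : MeasurableSpace Ω] [StandardBorelSpace Ω]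
    (μ : Measure Ω) [IsProbabilityMeasure μ]
    {N : Type*} [Fintype N] [DecidableEq N]
    (E0 EG : Finset (N × N)) (hE0 : ∀ e ∈ E0, e.1 ≠ e.2) (hEG : ∀ e ∈ EG, e.1 ≠ e.2)
    (Y0 Y1 : N → Ω → ℝ) (Ys1 Ys0 : N → N → Ω → ℝ)
    (hY0m : ∀ j, Measurable (Y0 j)) (hY1m : ∀ i, Measurable (Y1 i))
    (hYs1m : ∀ i j, (i, j) ∈ E0 → Measurable (Ys1 i j))
    (hYs0m : ∀ i j, (i, j) ∈ E0 → Measurable (Ys0 i j))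
    (hY0b : ∀ j ω, Y0 j ω = 0 ∨ Y0 j ω = 1)
    (hY1b : ∀ i ω, Y1 i ω = 0 ∨ Y1 i ω = 1)
    (hYs1b : ∀ i j, (i, j) ∈ E0 → ∀ ω, Ys1 i j ω = 0 ∨ Ys1 i j ω = 1)
    (hYs0b : ∀ i j, (i, j) ∈ E0 → ∀ ω, Ys0 i j ω = 0 ∨ Ys0 i j ω = 1)
    (H : MeasurableSpace Ω) (hH : H ≤ mΩ)
    -- irreversibility
    (hirr : ∀ i, ∀ᵐ ω ∂μ, Y1 i ω * (1 - Y0 i ω) = Y1 i ω)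
    -- consistency relations along causal edges
    (hcons1 : ∀ i j, (i, j) ∈ E0 →
      ∀ᵐ ω ∂μ, Y1 i ω * Y0 j ω = Ys1 i j ω * Y0 j ω)
    (hcons0 : ∀ i j, (i, j) ∈ E0 →
      ∀ᵐ ω ∂μ, Y1 i ω * (1 - Y0 j ω) = Ys0 i j ω * (1 - Y0 j ω))
    -- `Y_{i,0}` and `Y_{j,0}` conditionally independent given ℋ, for each causal edge
    (hci0 : ∀ i j, (i, j) ∈ E0 → CondIndepFun H hH (Y0 i) (Y0 j) μ)
    -- counterfactuals conditionally independent of `Y_{j,0}` given σ(ℋ, Y_{i,0})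
    (hle : ∀ i : N, H ⊔ MeasurableSpace.comap (Y0 i) inferInstance ≤ mΩ)
    (hciY : ∀ i j, (i, j) ∈ E0 →
      CondIndepFun (H ⊔ MeasurableSpace.comap (Y0 i) inferInstance) (hle i)
        (fun ω => (Ys1 i j ω, Ys0 i j ω)) (Y0 j) μ)
    -- `v² > 0` a.s. and `1 − μ_{i,0} > 0` a.s.
    (hv : ∀ᵐ ω ∂μ,
      0 < (1 / (Fintype.card N : ℝ)) *
            ∑ j, (μ[Y0 j | H]) ω * (1 - (μ[Y0 j | H]) ω))
    (hμ1 : ∀ i, ∀ᵐ ω ∂μ, 0 < 1 - (μ[Y0 i | H]) ω)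
    -- (a) vanishing covariance along non-causal proxy edges
    (hzero : ∀ i j, (i, j) ∈ EG \ E0 →
      condCov μ H (Y1 i) (Y0 j) =ᵐ[μ] 0)
    -- (b) nonnegative spillover effects on the untreated along missed causal edges
    (hmono : ∀ j : N, ∀ᵐ ω ∂μ,
      0 ≤ ∑ i ∈ Finset.univ.filter (fun i => (i, j) ∈ E0 \ EG),
            (μ[fun ω' => (Ys1 i j ω' - Ys0 i j ω')
                  * (if Y0 i ω' = 0 then (1 : ℝ) else 0) | H]) ω
              / (1 - (μ[Y0 i | H]) ω)) :
    ∀ᵐ ω ∂μ,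
      -- C_G^I ≤ D^I
      (1 / ((Fintype.card N : ℝ) *
            ((1 / (Fintype.card N : ℝ)) *
              ∑ l, (μ[Y0 l | H]) ω * (1 - (μ[Y0 l | H]) ω))))
          * ∑ e ∈ EG,
              condCov μ H (fun ω' => Y1 e.1 ω' / (1 - (μ[Y0 e.1 | H]) ω')) (Y0 e.2) ω
        ≤ ∑ j, ((μ[Y0 j | H]) ω * (1 - (μ[Y0 j | H]) ω)
              / ((Fintype.card N : ℝ) *
                  ((1 / (Fintype.card N : ℝ)) *
                    ∑ l, (μ[Y0 l | H]) ω * (1 - (μ[Y0 l | H]) ω))))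
            * ∑ i ∈ Finset.univ.filter (fun i => (i, j) ∈ E0),
                (μ[fun ω' => (Ys1 i j ω' - Ys0 i j ω')
                      * (if Y0 i ω' = 0 then (1 : ℝ) else 0) | H]) ω
                  / (1 - (μ[Y0 i | H]) ω) := by
  classical
  -- per-pair division identity
  have covdiv : ∀ p : N × N,
      condCov μ H (fun ω' => Y1 p.1 ω' / (1 - (μ[Y0 p.1|H]) ω')) (Y0 p.2)
        =ᵐ[μ] fun ω => condCov μ H (Y1 p.1) (Y0 p.2) ω / (1 - (μ[Y0 p.1|H]) ω) :=
    fun p => cov_div hH (hY0m p.1) (hY0m p.2) (hY1m p.1) (hY0b p.1) (hY0b p.2) (hY1b p.1)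
      (hirr p.1) (hμ1 p.1)
  -- per-edge covariance identity on E0
  have covplain : ∀ p ∈ (E0 : Set (N × N)),
      condCov μ H (Y1 p.1) (Y0 p.2) =ᵐ[μ]
        fun ω => (μ[Y0 p.2|H]) ω * (1 - (μ[Y0 p.2|H]) ω) *
          ((μ[fun ω' => (1 - Y0 p.1 ω') * Ys1 p.1 p.2 ω'|H]) ω
            - (μ[fun ω' => (1 - Y0 p.1 ω') * Ys0 p.1 p.2 ω'|H]) ω) := by
    rintro ⟨i, j⟩ hp
    rw [Finset.mem_coe] at hp
    have hp' : (i, j) ∈ E0 := hp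
    exact cov_plain hH (hY0m i) (hY0m j) (hY1m i) (hYs1m i j hp') (hYs0m i j hp')
      (hY0b i) (hY0b j) (hY1b i) (hYs1b i j hp') (hYs0b i j hp')
      (hirr i) (hcons1 i j hp') (hcons0 i j hp') (hci0 i j hp') rfl (hle i) (hciY i j hp')
  -- D-term identity on E0
  have Dterm : ∀ p ∈ (E0 : Set (N × N)),
      (μ[fun ω' => (Ys1 p.1 p.2 ω' - Ys0 p.1 p.2 ω')
          * (if Y0 p.1 ω' = 0 then (1:ℝ) else 0)|H])
        =ᵐ[μ] fun ω => (μ[fun ω' => (1 - Y0 p.1 ω') * Ys1 p.1 p.2 ω'|H]) ω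
          - (μ[fun ω' => (1 - Y0 p.1 ω') * Ys0 p.1 p.2 ω'|H]) ω := by
    rintro ⟨i, j⟩ hp
    rw [Finset.mem_coe] at hp
    have hp' : (i, j) ∈ E0 := hp
    have hfun : (fun ω' => (Ys1 i j ω' - Ys0 i j ω') * (if Y0 i ω' = 0 then (1:ℝ) else 0))
        = fun ω' => (1 - Y0 i ω') * Ys1 i j ω' - (1 - Y0 i ω') * Ys0 i j ω' := by
      funext ω'
      rcases hY0b i ω' with h|h
      · rw [if_pos (by rw [h])]; rw [h]; ring
      · rw [if_neg (by rw [h]; norm_num)]; rw [h]; ring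
    have hfIb : ∀ ω', 1 - Y0 i ω' = 0 ∨ 1 - Y0 i ω' = 1 := by
      intro ω'; rcases hY0b i ω' with h|h <;> simp [h]
    have mul01 : ∀ {u v : Ω → ℝ}, (∀ x, u x = 0 ∨ u x = 1) → (∀ x, v x = 0 ∨ v x = 1) →
        ∀ x, u x * v x = 0 ∨ u x * v x = 1 := by
      intro u v hu hv x; rcases hu x with h|h <;> rcases hv x with h2|h2 <;> simp [h, h2]
    have int1 : Integrable (fun ω' => (1 - Y0 i ω') * Ys1 i j ω') μ :=
      myIntegrable_of_bound (mΩ := mΩ) (μ := μ) ((measurable_const.sub (hY0m i)).mul (hYs1m i j hp')) 1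
        (bound01 (mul01 hfIb (hYs1b i j hp')))
    have int0 : Integrable (fun ω' => (1 - Y0 i ω') * Ys0 i j ω') μ :=
      myIntegrable_of_bound (mΩ := mΩ) (μ := μ) ((measurable_const.sub (hY0m i)).mul (hYs0m i j hp')) 1
        (bound01 (mul01 hfIb (hYs0b i j hp')))
    rw [hfun]
    have := condExp_sub (m := H) int1 int0
    simpa [Pi.sub_def] using this
  -- zero covariance on EG \ E0
  have covzero : ∀ p ∈ ((EG \ E0 : Finset (N × N)) : Set (N × N)),
      condCov μ H (Y1 p.1) (Y0 p.2) =ᵐ[μ] 0 := by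
    rintro ⟨i, j⟩ hp
    rw [Finset.mem_coe] at hp
    exact hzero i j hp
  have hbd : ∀ j : N, ∀ᵐ ω ∂μ, 0 ≤ (μ[Y0 j|H]) ω ∧ (μ[Y0 j|H]) ω ≤ 1 :=
    fun j => myCondexp_bdd01 (mΩ := mΩ) (μ := μ) (hY0m j) (hY0b j) hH
  filter_upwards [ae_all_iff.mpr covdiv,
    (ae_ball_iff (E0 : Set (N × N)).to_countable).mpr covplain,
    (ae_ball_iff (E0 : Set (N × N)).to_countable).mpr Dterm,
    (ae_ball_iff ((EG \ E0 : Finset (N × N)) : Set (N × N)).to_countable).mpr covzero,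
    ae_all_iff.mpr hmono, hv, ae_all_iff.mpr hμ1, ae_all_iff.mpr hbd]
    with ω hdiv hplain hD hz hmo hvω hpos hbdω
  -- notation
  have hn0 : (Fintype.card N : ℝ) ≠ 0 := by
    intro h; rw [h] at hvω; simp at hvω
  have hnpos : 0 < (Fintype.card N : ℝ) :=
    lt_of_le_of_ne (Nat.cast_nonneg _) (Ne.symm hn0)
  set K : ℝ := (Fintype.card N : ℝ) *
    ((1 / (Fintype.card N : ℝ)) * ∑ l, (μ[Y0 l|H]) ω * (1 - (μ[Y0 l|H]) ω)) with hKdef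
  have hKpos : 0 < K := mul_pos hnpos hvω
  -- the divided covariance values
  have hterm : ∀ p ∈ E0,
      condCov μ H (Y1 p.1) (Y0 p.2) ω / (1 - (μ[Y0 p.1|H]) ω)
        = (μ[Y0 p.2|H]) ω * (1 - (μ[Y0 p.2|H]) ω) *
            ((μ[fun ω' => (Ys1 p.1 p.2 ω' - Ys0 p.1 p.2 ω')
                * (if Y0 p.1 ω' = 0 then (1:ℝ) else 0)|H]) ω / (1 - (μ[Y0 p.1|H]) ω)) := by
    intro p hp
    have h1 := hplain p hp
    have h2 := hD p hp
    rw [h1, h2, mul_div_assoc]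
  -- key inequality between the two edge sums
  have hzsum : ∑ p ∈ EG \ E0,
      condCov μ H (Y1 p.1) (Y0 p.2) ω / (1 - (μ[Y0 p.1|H]) ω) = 0 := by
    refine Finset.sum_eq_zero fun p hp => ?_
    rw [hz p hp]
    · simp
  have hE0mEG : 0 ≤ ∑ p ∈ E0 \ EG,
      condCov μ H (Y1 p.1) (Y0 p.2) ω / (1 - (μ[Y0 p.1|H]) ω) := by
    have hre : ∑ p ∈ E0 \ EG, condCov μ H (Y1 p.1) (Y0 p.2) ω / (1 - (μ[Y0 p.1|H]) ω)
        = ∑ j, ∑ i ∈ Finset.univ.filter (fun i => (i, j) ∈ E0 \ EG),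
            condCov μ H (Y1 i) (Y0 j) ω / (1 - (μ[Y0 i|H]) ω) :=
      (sum_edges (E0 \ EG) (fun i j => condCov μ H (Y1 i) (Y0 j) ω
        / (1 - (μ[Y0 i|H]) ω))).symm
    rw [hre]
    refine Finset.sum_nonneg fun j _ => ?_
    have hin : ∀ i ∈ Finset.univ.filter (fun i => (i, j) ∈ E0 \ EG),
        condCov μ H (Y1 i) (Y0 j) ω / (1 - (μ[Y0 i|H]) ω)
          = (μ[Y0 j|H]) ω * (1 - (μ[Y0 j|H]) ω) *
              ((μ[fun ω' => (Ys1 i j ω' - Ys0 i j ω')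
                  * (if Y0 i ω' = 0 then (1:ℝ) else 0)|H]) ω / (1 - (μ[Y0 i|H]) ω)) := by
      intro i hi
      have hmem : (i, j) ∈ E0 \ EG := (Finset.mem_filter.mp hi).2
      exact hterm (i, j) (Finset.mem_sdiff.mp hmem).1
    rw [Finset.sum_congr rfl hin, ← Finset.mul_sum]
    exact mul_nonneg (mul_nonneg (hbdω j).1 (by linarith [(hbdω j).2])) (hmo j)
  have key : ∑ e ∈ EG, condCov μ H (Y1 e.1) (Y0 e.2) ω / (1 - (μ[Y0 e.1|H]) ω)
      ≤ ∑ p ∈ E0, condCov μ H (Y1 p.1) (Y0 p.2) ω / (1 - (μ[Y0 p.1|H]) ω) := by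
    have := sum_split E0 EG
      (fun p => condCov μ H (Y1 p.1) (Y0 p.2) ω / (1 - (μ[Y0 p.1|H]) ω))
    linarith [hzsum, hE0mEG, this]
  -- rewrite both sides of the goal
  calc (1 / K) * ∑ e ∈ EG,
        condCov μ H (fun ω' => Y1 e.1 ω' / (1 - (μ[Y0 e.1|H]) ω')) (Y0 e.2) ω
      = (1 / K) * ∑ e ∈ EG,
          condCov μ H (Y1 e.1) (Y0 e.2) ω / (1 - (μ[Y0 e.1|H]) ω) := by
        rw [Finset.sum_congr rfl (fun e _ => hdiv e)]
    _ ≤ (1 / K) * ∑ p ∈ E0,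
          condCov μ H (Y1 p.1) (Y0 p.2) ω / (1 - (μ[Y0 p.1|H]) ω) :=
        mul_le_mul_of_nonneg_left key (by positivity)
    _ = (1 / K) * ∑ j, ∑ i ∈ Finset.univ.filter (fun i => (i, j) ∈ E0),
          condCov μ H (Y1 i) (Y0 j) ω / (1 - (μ[Y0 i|H]) ω) := by
        rw [sum_edges E0 (fun i j => condCov μ H (Y1 i) (Y0 j) ω / (1 - (μ[Y0 i|H]) ω))]
    _ = ∑ j, ((μ[Y0 j|H]) ω * (1 - (μ[Y0 j|H]) ω) / K) *
          ∑ i ∈ Finset.univ.filter (fun i => (i, j) ∈ E0),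
            (μ[fun ω' => (Ys1 i j ω' - Ys0 i j ω')
                * (if Y0 i ω' = 0 then (1:ℝ) else 0)|H]) ω / (1 - (μ[Y0 i|H]) ω) := by
        rw [Finset.mul_sum]
        refine Finset.sum_congr rfl fun j _ => ?_
        have hin : ∀ i ∈ Finset.univ.filter (fun i => (i, j) ∈ E0),
            condCov μ H (Y1 i) (Y0 j) ω / (1 - (μ[Y0 i|H]) ω)
              = (μ[Y0 j|H]) ω * (1 - (μ[Y0 j|H]) ω) *
                  ((μ[fun ω' => (Ys1 i j ω' - Ys0 i j ω')
                      * (if Y0 i ω' = 0 then (1:ℝ) else 0)|H]) ω / (1 - (μ[Y0 i|H]) ω)) :=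
          fun i hi => hterm (i, j) (Finset.mem_filter.mp hi).2
        rw [Finset.sum_congr rfl hin, ← Finset.mul_sum]
        ring
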